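/- For the linear system ψ' = Aψ + H in ℝ³ with A having rows (-τ, f, 0), (-f, -τ, 0), (-h_x, -h_y, 0) and H = -(1/F²)(h_x, h_y, 0), with τ > 0, the third component ψ₃(t) satisfies lim_{t→∞} ψ₃'(t) = τ(h_x² + h_y²)/(F²(f² + τ²)). -/

import Mathlib

open Matrix

private lemma hasDerivAt_proj {ψ : ℝ → Fin 3 → ℝ} {d : Fin 3 → ℝ} {t : ℝ}
    (h : HasDerivAt ψ d t) (i : Fin 3) : HasDerivAt (fun s => ψ s i) (d i) t := by
  have h2 := ((ContinuousLinearMap.proj (R := ℝ) (φ := fun _ : Fin 3 => ℝ) i).hasFDerivAt.comp t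
    h.hasFDerivAt).hasDerivAt
  simpa [Function.comp_def] using h2

theorem stmt_19 (τ f F hx hy : ℝ) (hτ : 0 < τ) (hF : F ≠ 0) :
    let A : Matrix (Fin 3) (Fin 3) ℝ := !![-τ, f, 0; -f, -τ, 0; -hx, -hy, 0]
    let H : Fin 3 → ℝ := ![-(1 / F ^ 2) * hx, -(1 / F ^ 2) * hy, 0]
    ∀ ψ : ℝ → Fin 3 → ℝ,
      (∀ t : ℝ, HasDerivAt ψ (A.mulVec (ψ t) + H) t) →
        Filter.Tendsto (fun t => deriv (fun s => ψ s 2) t) Filter.atTop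
          (nhds (τ * (hx ^ 2 + hy ^ 2) / (F ^ 2 * (f ^ 2 + τ ^ 2)))) := by
  intro A H ψ hψ
  have hF2 : (F : ℝ) ^ 2 ≠ 0 := pow_ne_zero 2 hF
  have hD : f ^ 2 + τ ^ 2 ≠ 0 := by positivity
  -- equilibrium values
  set u₀ : ℝ := (-τ * hx - f * hy) / (F ^ 2 * (f ^ 2 + τ ^ 2)) with hu₀
  set v₀ : ℝ := (f * hx - τ * hy) / (F ^ 2 * (f ^ 2 + τ ^ 2)) with hv₀
  -- derivatives of the components
  have hu : ∀ t, HasDerivAt (fun s => ψ s 0)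
      (-τ * ψ t 0 + f * ψ t 1 + -(1 / F ^ 2) * hx) t := by
    intro t
    have h := hasDerivAt_proj (hψ t) 0
    have : (A.mulVec (ψ t) + H) 0 = -τ * ψ t 0 + f * ψ t 1 + -(1 / F ^ 2) * hx := by
      simp [A, H, Matrix.mulVec, dotProduct, Fin.sum_univ_three, Matrix.vecHead, Matrix.vecTail]
    rwa [this] at h
  have hv : ∀ t, HasDerivAt (fun s => ψ s 1)
      (-f * ψ t 0 + -τ * ψ t 1 + -(1 / F ^ 2) * hy) t := by
    intro t
    have h := hasDerivAt_proj (hψ t) 1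
    have : (A.mulVec (ψ t) + H) 1 = -f * ψ t 0 + -τ * ψ t 1 + -(1 / F ^ 2) * hy := by
      simp [A, H, Matrix.mulVec, dotProduct, Fin.sum_univ_three, Matrix.vecHead, Matrix.vecTail]
    rwa [this] at h
  -- shifted variables
  set a : ℝ → ℝ := fun t => ψ t 0 - u₀ with ha_def
  set b : ℝ → ℝ := fun t => ψ t 1 - v₀ with hb_def
  have ha : ∀ t, HasDerivAt a (-τ * a t + f * b t) t := by
    intro t
    have h := (hu t).sub_const u₀
    have he : -τ * ψ t 0 + f * ψ t 1 + -(1 / F ^ 2) * hx = -τ * a t + f * b t := by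
      simp only [ha_def, hb_def, hu₀, hv₀]
      field_simp
      ring
    rwa [he] at h
  have hb : ∀ t, HasDerivAt b (-f * a t + -τ * b t) t := by
    intro t
    have h := (hv t).sub_const v₀
    have he : -f * ψ t 0 + -τ * ψ t 1 + -(1 / F ^ 2) * hy = -f * a t + -τ * b t := by
      simp only [ha_def, hb_def, hu₀, hv₀]
      field_simp
      ring
    rwa [he] at h
  -- the squared norm
  set r : ℝ → ℝ := fun t => a t ^ 2 + b t ^ 2 with hr_def
  have hr : ∀ t, HasDerivAt r (-(2 * τ) * r t) t := by
    intro t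
    have h := ((ha t).pow 2).add ((hb t).pow 2)
    have he : (2 : ℕ) * a t ^ (2 - 1) * (-τ * a t + f * b t) +
        (2 : ℕ) * b t ^ (2 - 1) * (-f * a t + -τ * b t) = -(2 * τ) * r t := by
      simp [hr_def]; ring
    rwa [he] at h
  have hrnn : ∀ t, 0 ≤ r t := fun t => by positivity
  -- r t * exp (2τ t) is constant
  set g : ℝ → ℝ := fun t => r t * Real.exp (2 * τ * t) with hg_def
  have hg : ∀ t, HasDerivAt g 0 t := by
    intro t
    have hexp : HasDerivAt (fun t : ℝ => Real.exp (2 * τ * t))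
        (2 * τ * Real.exp (2 * τ * t)) t := by
      have := ((hasDerivAt_id t).const_mul (2 * τ)).exp
      simpa [mul_comm] using this
    have h := (hr t).mul hexp
    have he : -(2 * τ) * r t * Real.exp (2 * τ * t) +
        r t * (2 * τ * Real.exp (2 * τ * t)) = 0 := by ring
    rwa [he] at h
  have hgc : ∀ t, g t = g 0 := by
    intro t
    exact is_const_of_deriv_eq_zero (fun x => (hg x).differentiableAt)
      (fun x => (hg x).deriv) t 0
  have hr_eq : ∀ t, r t = r 0 * Real.exp (-(2 * τ * t)) := by
    intro t
    have h := hgc t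
    simp only [hg_def] at h
    have hne : Real.exp (2 * τ * t) ≠ 0 := Real.exp_ne_zero _
    rw [Real.exp_neg]
    field_simp at h ⊢
    simpa [mul_comm] using h
  -- r tends to 0
  have hr0 : Filter.Tendsto r Filter.atTop (nhds 0) := by
    have h1 : Filter.Tendsto (fun t : ℝ => 2 * τ * t) Filter.atTop Filter.atTop :=
      Filter.Tendsto.const_mul_atTop (by positivity) Filter.tendsto_id
    have h2 : Filter.Tendsto (fun t : ℝ => Real.exp (-(2 * τ * t))) Filter.atTop (nhds 0) := by
      have := Real.tendsto_exp_neg_atTop_nhds_zero.comp h1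
      simpa [Function.comp_def] using this
    have h3 := h2.const_mul (r 0)
    simp only [mul_zero] at h3
    exact h3.congr (fun t => (hr_eq t).symm)
  -- a and b tend to 0
  have habs : ∀ (c : ℝ → ℝ), (∀ t, c t ^ 2 ≤ r t) → Filter.Tendsto c Filter.atTop (nhds 0) := by
    intro c hc
    have hsq : Filter.Tendsto (fun t => Real.sqrt (r t)) Filter.atTop (nhds 0) := by
      have := (Real.continuous_sqrt.tendsto 0).comp hr0
      simpa [Function.comp_def] using this
    have hub : ∀ t, c t ≤ Real.sqrt (r t) := by
      intro t
      nlinarith [Real.sq_sqrt (hrnn t), Real.sqrt_nonneg (r t), hc t]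
    have hlb : ∀ t, -Real.sqrt (r t) ≤ c t := by
      intro t
      nlinarith [Real.sq_sqrt (hrnn t), Real.sqrt_nonneg (r t), hc t]
    have hneg : Filter.Tendsto (fun t => -Real.sqrt (r t)) Filter.atTop (nhds 0) := by
      simpa using hsq.neg
    exact tendsto_of_tendsto_of_tendsto_of_le_of_le hneg hsq
      (fun t => hlb t) (fun t => hub t)
  have haT : Filter.Tendsto a Filter.atTop (nhds 0) :=
    habs a (fun t => by simp only [hr_def]; nlinarith [sq_nonneg (b t)])
  have hbT : Filter.Tendsto b Filter.atTop (nhds 0) :=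
    habs b (fun t => by simp only [hr_def]; nlinarith [sq_nonneg (a t)])
  -- the derivative of the third component
  have hw : ∀ t, deriv (fun s => ψ s 2) t = -hx * a t + -hy * b t + (-hx * u₀ + -hy * v₀) := by
    intro t
    have h := hasDerivAt_proj (hψ t) 2
    have he : (A.mulVec (ψ t) + H) 2 = -hx * a t + -hy * b t + (-hx * u₀ + -hy * v₀) := by
      simp [A, H, Matrix.mulVec, dotProduct, Fin.sum_univ_three, Matrix.vecHead, Matrix.vecTail, ha_def, hb_def]
      ring
    rw [he] at h
    exact h.deriv
  have hL : -hx * u₀ + -hy * v₀ = τ * (hx ^ 2 + hy ^ 2) / (F ^ 2 * (f ^ 2 + τ ^ 2)) := by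
    simp only [hu₀, hv₀]
    field_simp
    ring
  have hT : Filter.Tendsto (fun t => -hx * a t + -hy * b t + (-hx * u₀ + -hy * v₀))
      Filter.atTop (nhds (-hx * u₀ + -hy * v₀)) := by
    have h := ((haT.const_mul (-hx)).add (hbT.const_mul (-hy))).add_const (-hx * u₀ + -hy * v₀)
    simpa using h
  rw [← hL]
  exact hT.congr (fun t => (hw t).symm)
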